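/- Let B ∈ M_3 be a unitary matrix with tr(B* Bᵀ) = −1, where Bᵀ is the transpose of B. Define the linear maps L and Γ on M_3 by L(X) := (1/2)(tr(X) I₃ − B Xᵀ B* − 2X) and Γ(X) := (1/2)(B Xᵀ B* + (1/3) tr(X) I₃). Then: (i) L is Hermitian-preserving with L(I₃) = 0 and tr(L(X)) = 0 for all X; (ii) Γ is Hermitian-preserving, unital, trace-preserving, satisfies ⟨id, Γ⟩ = 0, and ⟨Ad_U, Γ⟩ ≥ 0 for every unitary U ∈ M_3 (i.e. Γ ∈ D(3)); (iii) ⟨Γ, L⟩ = −1/9. -/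

import Mathlib

noncomputable section
open scoped Kronecker
open Filter Topology Matrix

/-- `M_d`, the algebra of `d × d` complex matrices. -/
abbrev Md (d : ℕ) := Matrix (Fin d) (Fin d) ℂ

/-- `Ad_U : X ↦ U* X U` for a unitary `U`. -/
def adU {d : ℕ} (U : Matrix.unitaryGroup (Fin d) ℂ) : Md d →ₗ[ℂ] Md d where
  toFun X := (U : Md d)ᴴ * X * (U : Md d)
  map_add' X Y := by simp [Matrix.mul_add, Matrix.add_mul]
  map_smul' c X := by simp [Matrix.mul_smul, Matrix.smul_mul]

/-- A linear map is completely positive if it has a Kraus decomposition. -/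
def IsCP {d : ℕ} (Φ : Md d →ₗ[ℂ] Md d) : Prop :=
  ∃ (n : ℕ) (V : Fin n → Md d), ∀ X, Φ X = ∑ j, (V j)ᴴ * X * (V j)

def IsUnital {d : ℕ} (Φ : Md d →ₗ[ℂ] Md d) : Prop := Φ 1 = 1

def IsTracePreserving {d : ℕ} (Φ : Md d →ₗ[ℂ] Md d) : Prop :=
  ∀ X, (Φ X).trace = X.trace

def IsHermitianPreserving {d : ℕ} (Φ : Md d →ₗ[ℂ] Md d) : Prop :=
  ∀ X, Φ Xᴴ = (Φ X)ᴴ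

/-- A unital quantum channel: CP, unital and trace-preserving. -/
def IsUnitalChannel {d : ℕ} (Φ : Md d →ₗ[ℂ] Md d) : Prop :=
  IsCP Φ ∧ IsUnital Φ ∧ IsTracePreserving Φ

/-- A mixed unitary channel: a convex combination of unitary conjugations. -/
def IsMixedUnitary {d : ℕ} (Φ : Md d →ₗ[ℂ] Md d) : Prop :=
  ∃ (ℓ : ℕ) (U : Fin ℓ → Matrix.unitaryGroup (Fin d) ℂ) (lam : Fin ℓ → ℝ),
    (∀ j, 0 ≤ lam j) ∧ (∀ j, lam j ≤ 1) ∧ (∑ j, lam j = 1) ∧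
    Φ = ∑ j, (lam j : ℂ) • adU (U j)

/-- The Choi matrix `J(Φ) = (1/d) ∑_{i,j} E_{ij} ⊗ Φ(E_{ij})`. -/
def choi {d : ℕ} (Φ : Md d →ₗ[ℂ] Md d) : Matrix (Fin d × Fin d) (Fin d × Fin d) ℂ :=
  (d : ℂ)⁻¹ • ∑ i : Fin d, ∑ j : Fin d,
    (Matrix.single i j (1 : ℂ)) ⊗ₖ Φ (Matrix.single i j (1 : ℂ))

/-- `⟨Φ, Ψ⟩ = tr(J(Φ)* J(Ψ))`; this is a real number whenever `Φ, Ψ` are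
Hermitian-preserving, so we record its real part. -/
def pairRe {d : ℕ} (Φ Ψ : Md d →ₗ[ℂ] Md d) : ℝ := (((choi Φ)ᴴ * choi Ψ).trace).re

/-- The Hilbert–Schmidt (Choi) norm `‖Φ‖₂ = tr(J(Φ)* J(Φ))^{1/2}`. -/
def hsNorm {d : ℕ} (Φ : Md d →ₗ[ℂ] Md d) : ℝ := Real.sqrt (pairRe Φ Φ)

attribute [local instance] Matrix.normedAddCommGroup Matrix.normedSpace

/-- The exponential `e^{tL}` of a linear map `L` on `M_d`. -/
def expL {d : ℕ} (L : Md d →ₗ[ℂ] Md d) (t : ℝ) : Md d →ₗ[ℂ] Md d :=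
  letI : IsTopologicalRing (Md d →L[ℂ] Md d) :=
    @NonUnitalSeminormedRing.toIsTopologicalRing _
      (@NormedRing.toSeminormedRing (Md d →L[ℂ] Md d)
        ContinuousLinearMap.toNormedRing).toNonUnitalSeminormedRing
  ((NormedSpace.exp ((t : ℂ) • (LinearMap.toContinuousLinearMap L)) :
      Md d →L[ℂ] Md d)).toLinearMap

/-- Membership in `D(d)`: Hermitian-preserving, unital, trace-preserving maps `Γ` with
`⟨id, Γ⟩ = 0` and `⟨Ad_U, Γ⟩ ≥ 0` for all unitaries `U`. -/
def MemD {d : ℕ} (Γ : Md d →ₗ[ℂ] Md d) : Prop :=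
  IsHermitianPreserving Γ ∧ IsUnital Γ ∧ IsTracePreserving Γ ∧
    pairRe LinearMap.id Γ = 0 ∧
    ∀ U : Matrix.unitaryGroup (Fin d) ℂ, 0 ≤ pairRe (adU U) Γ

-- ======================= auxiliary lemmas =======================
section Aux
open Matrix

lemma conjT_transpose_comm {d : ℕ} (X : Md d) : Xᴴᵀ = Xᵀᴴ := by
  ext a b; simp [conjTranspose_apply, transpose_apply]

abbrev Eb {d : ℕ} (i j : Fin d) : Md d := Matrix.single i j (1 : ℂ)

lemma Eb_conjT {d : ℕ} (i j : Fin d) : (Eb i j)ᴴ = Eb j i := by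
  ext a b
  simp only [conjTranspose_apply, Matrix.single, of_apply]
  aesop

lemma Eb_trans {d : ℕ} (i j : Fin d) : (Eb i j)ᵀ = Eb j i := by
  ext a b
  simp only [transpose_apply, Matrix.single, of_apply]
  aesop

lemma mul_Eb_mul {d : ℕ} (M N : Md d) (i j a b : Fin d) :
    (M * Eb i j * N) a b = M a i * N j b := by
  classical
  simp only [mul_apply, Matrix.single, of_apply, ite_mul, mul_ite, one_mul, mul_one,
    zero_mul, mul_zero]
  simp [ite_and, Finset.sum_ite_eq, Finset.sum_ite_eq', ite_mul, zero_mul]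

lemma trace_mul_Eb {d : ℕ} (M : Md d) (i j : Fin d) :
    (M * Eb i j).trace = M j i := by
  classical
  simp only [trace, diag, mul_apply, Matrix.single, of_apply, mul_ite, mul_one, mul_zero]
  rw [Finset.sum_comm]
  simp [ite_and, Finset.sum_ite_eq, Finset.sum_ite_eq']

lemma trace_Eb {d : ℕ} (i j : Fin d) :
    (Eb i j : Md d).trace = if i = j then 1 else 0 := by
  classical
  have := trace_mul_Eb (1 : Md d) i j
  rw [one_mul] at this
  rw [this, one_apply]
  simp [eq_comm]

lemma trace_sandwich {d : ℕ} (M N : Md d) (h : N * M = 1) (i j : Fin d) :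
    (M * Eb i j * N).trace = if i = j then 1 else 0 := by
  rw [Matrix.trace_mul_cycle, h, Matrix.one_mul, trace_Eb]

lemma trace_two_sandwich {d : ℕ} (B : Md d) (h : Bᴴ * B = 1) (i j : Fin d) :
    ((B * Eb i j * Bᴴ) * (B * Eb j i * Bᴴ)).trace = 1 := by
  have e : (B * Eb i j * Bᴴ) * (B * Eb j i * Bᴴ) = B * Eb i i * Bᴴ := by
    simp only [Matrix.mul_assoc]
    rw [← Matrix.mul_assoc Bᴴ B, h, Matrix.one_mul, ← Matrix.mul_assoc (Eb i j) (Eb j i),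
      Matrix.single_mul_single_same, one_mul]
  rw [e, trace_sandwich B Bᴴ h, if_pos rfl]

lemma choi_apply {d : ℕ} (Φ : Md d →ₗ[ℂ] Md d) (i k j l : Fin d) :
    choi Φ (i, k) (j, l) = (d : ℂ)⁻¹ * Φ (Eb i j) k l := by
  classical
  simp only [choi, Matrix.smul_apply, Matrix.sum_apply, kroneckerMap_apply, smul_eq_mul]
  congr 1
  rw [show (∑ i' : Fin d, ∑ j' : Fin d,
      Matrix.single i' j' (1:ℂ) i j * (Φ (Matrix.single i' j' (1:ℂ))) k l)
    = ∑ i' : Fin d, ∑ j' : Fin d,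
      (if i' = i then (if j' = j then (Φ (Matrix.single i' j' (1:ℂ))) k l else 0) else 0) from by
      refine Finset.sum_congr rfl fun i' _ => Finset.sum_congr rfl fun j' _ => ?_
      by_cases h1 : i' = i <;> by_cases h2 : j' = j <;>
        simp [Matrix.single, h1, h2]]
  simp [Finset.sum_ite_eq, Finset.sum_ite_eq']

lemma trace_conjT_mul {n : Type*} [Fintype n] (X Y : Matrix n n ℂ) :
    (Xᴴ * Y).trace = ∑ p, ∑ q, star (X q p) * Y q p := by
  simp [trace, diag, mul_apply, conjTranspose_apply]

lemma choi_pair {d : ℕ} (Φ Ψ : Md d →ₗ[ℂ] Md d) :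
    ((choi Φ)ᴴ * choi Ψ).trace
      = ((d : ℂ)⁻¹)^2 * ∑ i : Fin d, ∑ j : Fin d, ((Φ (Eb i j))ᴴ * Ψ (Eb i j)).trace := by
  classical
  rw [trace_conjT_mul]
  have this1 : ∀ p q : Fin d × Fin d, star (choi Φ q p) * choi Ψ q p
      = ((d:ℂ)⁻¹)^2 * (star (Φ (Eb q.1 p.1) q.2 p.2) * Ψ (Eb q.1 p.1) q.2 p.2) := by
    rintro ⟨j, l⟩ ⟨i, k⟩
    rw [choi_apply, choi_apply, star_mul']
    have : star ((d:ℂ)⁻¹) = (d:ℂ)⁻¹ := by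
      simp [Complex.star_def, Complex.conj_natCast]
    rw [this]; ring
  have key : ∀ (F : Fin d → Fin d → Fin d → Fin d → ℂ),
      ∑ p : Fin d × Fin d, ∑ q : Fin d × Fin d, F q.1 p.1 q.2 p.2
        = ∑ i, ∑ j, ∑ l, ∑ k, F i j k l := by
    intro F
    rw [Finset.sum_comm, Fintype.sum_prod_type]
    refine Finset.sum_congr rfl fun i _ => ?_
    rw [Finset.sum_comm, Fintype.sum_prod_type]
  simp_rw [this1, ← Finset.mul_sum]
  congr 1
  rw [key fun i j k l => star (Φ (Eb i j) k l) * Ψ (Eb i j) k l]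
  refine Finset.sum_congr rfl fun i _ => Finset.sum_congr rfl fun j _ => ?_
  rw [trace_conjT_mul]

def nsq (w : Fin 3 → ℂ) : ℝ := ∑ i, Complex.normSq (w i)

lemma nsq_mulVec {C : Md 3} (h : Cᴴ * C = 1) (v : Fin 3 → ℂ) :
    nsq (C *ᵥ v) = nsq v := by
  have key : star (C *ᵥ v) ⬝ᵥ (C *ᵥ v) = star v ⬝ᵥ v := by
    rw [Matrix.star_mulVec, Matrix.dotProduct_mulVec, Matrix.vecMul_vecMul, h,
      Matrix.vecMul_one]
  have expand : ∀ w : Fin 3 → ℂ, star w ⬝ᵥ w = ((nsq w : ℝ) : ℂ) := by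
    intro w
    simp [dotProduct, nsq, Pi.star_apply, Complex.star_def,
      Complex.normSq_eq_conj_mul_self]
  rw [expand, expand] at key
  exact_mod_cast key

lemma normSq_sub_le (x y : ℂ) :
    Complex.normSq (x - y) ≤ 2 * Complex.normSq x + 2 * Complex.normSq y := by
  simp only [Complex.normSq_apply, Complex.sub_re, Complex.sub_im]
  nlinarith [sq_nonneg (x.re + y.re), sq_nonneg (x.im + y.im)]

lemma nsq_A_le {C : Md 3} (h1 : Cᴴ * C = 1) (h2 : C * Cᴴ = 1) (v : Fin 3 → ℂ) :
    nsq ((C - Cᵀ) *ᵥ v) ≤ 4 * nsq v := by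
  have hT : Cᵀᴴ * Cᵀ = 1 := by
    have e : Cᵀᴴ = Cᴴᵀ := by ext a b; simp
    rw [e, ← Matrix.transpose_mul, h2, Matrix.transpose_one]
  have e1 := nsq_mulVec h1 v
  have e2 := nsq_mulVec hT v
  have esub : (C - Cᵀ) *ᵥ v = fun i => (C *ᵥ v) i - (Cᵀ *ᵥ v) i := by
    funext i; rw [Matrix.sub_mulVec]; rfl
  rw [esub]
  have step : nsq (fun i => (C *ᵥ v) i - (Cᵀ *ᵥ v) i)
      ≤ ∑ i, (2 * Complex.normSq ((C *ᵥ v) i) + 2 * Complex.normSq ((Cᵀ *ᵥ v) i)) := by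
    refine Finset.sum_le_sum fun i _ => normSq_sub_le _ _
  refine step.trans ?_
  rw [Finset.sum_add_distrib, ← Finset.mul_sum, ← Finset.mul_sum]
  have e1' : (∑ i, Complex.normSq ((C *ᵥ v) i)) = nsq v := e1
  have e2' : (∑ i, Complex.normSq ((Cᵀ *ᵥ v) i)) = nsq v := e2
  rw [e1', e2']
  ring_nf; linarith

lemma Tre_ge (C : Md 3) (h1 : Cᴴ * C = 1) (h2 : C * Cᴴ = 1) :
    (-1:ℝ) ≤ (∑ i : Fin 3, ∑ j : Fin 3, C i j * Cᴴ i j).re := by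
  set a : ℂ := C 0 1 - C 1 0 with ha
  set b : ℂ := C 0 2 - C 2 0 with hb
  set c : ℂ := C 1 2 - C 2 1 with hc
  set s : ℝ := Complex.normSq a + Complex.normSq b + Complex.normSq c with hs
  have htot : ∑ i : Fin 3, ∑ j : Fin 3, Complex.normSq (C i j) = 3 := by
    have e : (Cᴴ * C).trace = ∑ p : Fin 3, ∑ q : Fin 3, ((Complex.normSq (C q p) : ℝ) : ℂ) := by
      simp only [trace, diag, mul_apply, conjTranspose_apply]
      refine Finset.sum_congr rfl fun p _ => Finset.sum_congr rfl fun q _ => ?_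
      rw [Complex.star_def, ← Complex.normSq_eq_conj_mul_self]
    rw [h1, Matrix.trace_one] at e
    have e2 : ((∑ p : Fin 3, ∑ q : Fin 3, Complex.normSq (C q p) : ℝ) : ℂ) = 3 := by
      push_cast
      rw [← e]
      norm_num
    have e3 := Complex.ofReal_injective
      (by exact_mod_cast e2 :
        ((∑ p : Fin 3, ∑ q : Fin 3, Complex.normSq (C q p) : ℝ) : ℂ) = ((3:ℝ):ℂ))
    rw [Finset.sum_comm] at e3
    exact e3
  have hreT : (∑ i : Fin 3, ∑ j : Fin 3, C i j * Cᴴ i j).re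
      = (∑ i : Fin 3, ∑ j : Fin 3, Complex.normSq (C i j)) - s := by
    simp only [Fin.sum_univ_three, Complex.add_re, Complex.mul_re, conjTranspose_apply,
      Complex.normSq_apply, hs, ha, hb, hc, Complex.sub_re, Complex.sub_im,
      Complex.conj_re, Complex.conj_im, Complex.star_def]
    ring
  have hineq : ∀ v : Fin 3 → ℂ, nsq ((C - Cᵀ) *ᵥ v) ≤ 4 * nsq v := nsq_A_le h1 h2
  have hid1 : nsq ((C - Cᵀ) *ᵥ ![starRingEnd ℂ b, starRingEnd ℂ c, 0])
      = s * nsq ![starRingEnd ℂ b, starRingEnd ℂ c, 0] := by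
    simp only [nsq, Fin.sum_univ_three, Matrix.mulVec, dotProduct,
      Matrix.sub_apply, Matrix.transpose_apply, Matrix.cons_val_zero, Matrix.cons_val_one,
      Matrix.head_cons, Matrix.cons_val_two, Matrix.tail_cons, hs, ha, hb, hc,
      Complex.normSq_apply, Complex.add_re, Complex.add_im, Complex.mul_re, Complex.mul_im,
      Complex.sub_re, Complex.sub_im, Complex.conj_re, Complex.conj_im, Complex.zero_re,
      Complex.zero_im, mul_zero, zero_mul]
    ring
  have hid2 : nsq ((C - Cᵀ) *ᵥ ![starRingEnd ℂ a, 0, -(starRingEnd ℂ c)])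
      = s * nsq ![starRingEnd ℂ a, 0, -(starRingEnd ℂ c)] := by
    simp only [nsq, Fin.sum_univ_three, Matrix.mulVec, dotProduct,
      Matrix.sub_apply, Matrix.transpose_apply, Matrix.cons_val_zero, Matrix.cons_val_one,
      Matrix.head_cons, Matrix.cons_val_two, Matrix.tail_cons, hs, ha, hb, hc,
      Complex.normSq_apply, Complex.add_re, Complex.add_im, Complex.mul_re, Complex.mul_im,
      Complex.sub_re, Complex.sub_im, Complex.conj_re, Complex.conj_im, Complex.zero_re,
      Complex.zero_im, Complex.neg_re, Complex.neg_im, mul_zero, zero_mul]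
    ring
  have hid3 : nsq ((C - Cᵀ) *ᵥ ![0, starRingEnd ℂ a, starRingEnd ℂ b])
      = s * nsq ![0, starRingEnd ℂ a, starRingEnd ℂ b] := by
    simp only [nsq, Fin.sum_univ_three, Matrix.mulVec, dotProduct,
      Matrix.sub_apply, Matrix.transpose_apply, Matrix.cons_val_zero, Matrix.cons_val_one,
      Matrix.head_cons, Matrix.cons_val_two, Matrix.tail_cons, hs, ha, hb, hc,
      Complex.normSq_apply, Complex.add_re, Complex.add_im, Complex.mul_re, Complex.mul_im,
      Complex.sub_re, Complex.sub_im, Complex.conj_re, Complex.conj_im, Complex.zero_re,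
      Complex.zero_im, mul_zero, zero_mul]
    ring
  have hn1 : nsq ![starRingEnd ℂ b, starRingEnd ℂ c, 0]
      = Complex.normSq b + Complex.normSq c := by
    simp [nsq, Fin.sum_univ_three]
  have hn2 : nsq ![starRingEnd ℂ a, 0, -(starRingEnd ℂ c)]
      = Complex.normSq a + Complex.normSq c := by
    simp [nsq, Fin.sum_univ_three]
  have hn3 : nsq ![0, starRingEnd ℂ a, starRingEnd ℂ b]
      = Complex.normSq a + Complex.normSq b := by
    simp [nsq, Fin.sum_univ_three]
  have i1 := hineq ![starRingEnd ℂ b, starRingEnd ℂ c, 0]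
  have i2 := hineq ![starRingEnd ℂ a, 0, -(starRingEnd ℂ c)]
  have i3 := hineq ![0, starRingEnd ℂ a, starRingEnd ℂ b]
  rw [hid1, hn1] at i1
  rw [hid2, hn2] at i2
  rw [hid3, hn3] at i3
  have hs0 : 0 ≤ s := by
    have := Complex.normSq_nonneg a
    have := Complex.normSq_nonneg b
    have := Complex.normSq_nonneg c
    simp only [hs]; linarith
  have hs4 : s ≤ 4 := by nlinarith
  rw [hreT, htot]
  linarith

end Aux
/-- for a unitary `B ∈ M_3` with `tr(B* Bᵀ) = −1`, the maps
`L(X) = (1/2)(tr(X) I₃ − B Xᵀ B* − 2X)` and `Γ(X) = (1/2)(B Xᵀ B* + (1/3) tr(X) I₃)`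
satisfy: `L` is Hermitian-preserving with `L(I₃) = 0` and `tr(L(X)) = 0`;
`Γ ∈ D(3)`; and `⟨Γ, L⟩ = −1/9`. -/
theorem stmt_16 (B : Md 3) (hB : B ∈ Matrix.unitaryGroup (Fin 3) ℂ)
    (htrB : (Bᴴ * Bᵀ).trace = -1)
    (L Γ : Md 3 →ₗ[ℂ] Md 3)
    (hL : ∀ X : Md 3,
      L X = (2 : ℂ)⁻¹ • (X.trace • (1 : Md 3) - B * Xᵀ * Bᴴ - (2 : ℂ) • X))
    (hΓ : ∀ X : Md 3,
      Γ X = (2 : ℂ)⁻¹ • (B * Xᵀ * Bᴴ + (3 : ℂ)⁻¹ • (X.trace • (1 : Md 3)))) :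
    (IsHermitianPreserving L ∧ L 1 = 0 ∧ ∀ X : Md 3, (L X).trace = 0) ∧
    MemD Γ ∧
    pairRe Γ L = -(1 / 9) := by
  have hB1 : Bᴴ * B = 1 := by
    have := (Matrix.mem_unitaryGroup_iff').mp hB
    simpa [Matrix.star_eq_conjTranspose] using this
  have hB2 : B * Bᴴ = 1 := by
    have := (Matrix.mem_unitaryGroup_iff).mp hB
    simpa [Matrix.star_eq_conjTranspose] using this
  -- the key entry sum from htrB
  have hsumB : ∑ i : Fin 3, ∑ j : Fin 3, B i j * Bᴴ i j = -1 := by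
    have e : (Bᴴ * Bᵀ).trace = ∑ i : Fin 3, ∑ j : Fin 3, B i j * Bᴴ i j := by
      rw [Matrix.trace]
      refine Finset.sum_congr rfl fun i _ => ?_
      simp only [Matrix.diag, Matrix.mul_apply, Matrix.transpose_apply,
        Matrix.conjTranspose_apply]
      exact Finset.sum_congr rfl fun j _ => by ring
    rw [← e, htrB]
  -- the pairing formula specialized to d = 3
  have hpair : ∀ Φ Ψ : Md 3 →ₗ[ℂ] Md 3, ((choi Φ)ᴴ * choi Ψ).trace
      = ((3:ℂ)⁻¹)^2 * ∑ i : Fin 3, ∑ j : Fin 3, ((Φ (Eb i j))ᴴ * Ψ (Eb i j)).trace := by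
    intro Φ Ψ
    have := choi_pair Φ Ψ
    norm_num at this
    norm_num
    exact this
  -- Part 1 : properties of L
  have hLherm : IsHermitianPreserving L := by
    intro X
    rw [hL, hL]
    simp [conjTranspose_smul, conjTranspose_sub, Matrix.conjTranspose_mul,
      Matrix.trace_conjTranspose, conjT_transpose_comm, Matrix.mul_assoc,
      Matrix.conjTranspose_one, smul_sub]
  have hL1 : L 1 = 0 := by
    rw [hL]
    rw [Matrix.transpose_one, Matrix.mul_one, hB2, Matrix.trace_one]
    simp
    module
  have hLtr : ∀ X : Md 3, (L X).trace = 0 := by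
    intro X
    rw [hL]
    rw [Matrix.trace_smul, Matrix.trace_sub, Matrix.trace_sub, Matrix.trace_smul,
      Matrix.trace_smul, Matrix.trace_one, Matrix.trace_mul_cycle]
    rw [hB1, Matrix.one_mul, Matrix.trace_transpose]
    simp
    ring
  -- Part 2 : Γ basic properties
  have hΓherm : IsHermitianPreserving Γ := by
    intro X
    rw [hΓ, hΓ]
    simp [conjTranspose_smul, conjTranspose_add, Matrix.conjTranspose_mul,
      Matrix.trace_conjTranspose, conjT_transpose_comm, Matrix.mul_assoc,
      Matrix.conjTranspose_one, smul_add]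
  have hΓ1 : IsUnital Γ := by
    show Γ 1 = 1
    have htr1 : (1 : Md 3).trace = (3:ℂ) := by simp [Matrix.trace_one]
    rw [hΓ, Matrix.transpose_one, Matrix.mul_one, hB2, htr1]
    module
  have hΓtr : IsTracePreserving Γ := by
    intro X
    rw [hΓ]
    rw [Matrix.trace_smul, Matrix.trace_add, Matrix.trace_smul, Matrix.trace_smul,
      Matrix.trace_one, Matrix.trace_mul_cycle]
    rw [hB1, Matrix.one_mul, Matrix.trace_transpose]
    simp
    ring
  -- pairing of id with Γ
  have hidsum : ∑ i : Fin 3, ∑ j : Fin 3,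
      (((LinearMap.id : Md 3 →ₗ[ℂ] Md 3) (Eb i j))ᴴ * Γ (Eb i j)).trace = 0 := by
    simp only [LinearMap.id_coe, id_eq]
    have term : ∀ i j : Fin 3, ((Eb i j)ᴴ * Γ (Eb i j)).trace
        = 2⁻¹ * (B i j * Bᴴ i j) + 2⁻¹ * 3⁻¹ * (if i = j then 1 else 0) := by
      intro i j
      rw [hΓ (Eb i j), Eb_conjT, Eb_trans, trace_Eb]
      rw [Matrix.mul_smul, Matrix.trace_smul, Matrix.mul_add, Matrix.trace_add,
        Matrix.mul_smul, Matrix.trace_smul, Matrix.mul_smul, Matrix.trace_smul,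
        Matrix.mul_one, trace_Eb]
      rw [Matrix.trace_mul_comm, trace_mul_Eb, mul_Eb_mul]
      by_cases h : i = j <;> simp [h, eq_comm] <;> ring
    simp_rw [term, Finset.sum_add_distrib, ← Finset.mul_sum]
    rw [hsumB]
    simp [Finset.sum_ite_eq]
  have hpair_id : pairRe LinearMap.id Γ = 0 := by
    unfold pairRe
    rw [hpair, hidsum, mul_zero]
    simp
  -- pairing of adU U with Γ
  have hpair_adU : ∀ U : Matrix.unitaryGroup (Fin 3) ℂ, 0 ≤ pairRe (adU U) Γ := by
    intro U
    set Uc : Md 3 := (U : Md 3) with hUc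
    have hU1 : Ucᴴ * Uc = 1 := by
      have := (Matrix.mem_unitaryGroup_iff').mp U.2
      simpa [Matrix.star_eq_conjTranspose] using this
    have hU2 : Uc * Ucᴴ = 1 := by
      have := (Matrix.mem_unitaryGroup_iff).mp U.2
      simpa [Matrix.star_eq_conjTranspose] using this
    have hadsum : ∑ i : Fin 3, ∑ j : Fin 3, ((adU U (Eb i j))ᴴ * Γ (Eb i j)).trace
        = 2⁻¹ * (∑ i : Fin 3, ∑ j : Fin 3, (Uc * B) i j * (Bᴴ * Ucᴴ) i j) + 2⁻¹ := by
      have termU : ∀ i j : Fin 3, ((adU U (Eb i j))ᴴ * Γ (Eb i j)).trace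
          = 2⁻¹ * ((Uc * B) i j * (Bᴴ * Ucᴴ) i j) + 2⁻¹ * 3⁻¹ * (if i = j then 1 else 0) := by
        intro i j
        have hadU : (adU U (Eb i j))ᴴ = Ucᴴ * Eb j i * Uc := by
          show ((Ucᴴ * Eb i j * Uc))ᴴ = _
          simp [Matrix.conjTranspose_mul, Eb_conjT, Matrix.mul_assoc]
        rw [hadU, hΓ (Eb i j), Eb_trans, trace_Eb]
        rw [Matrix.mul_smul, Matrix.trace_smul, Matrix.mul_add, Matrix.trace_add,
          Matrix.mul_smul, Matrix.trace_smul, Matrix.mul_smul, Matrix.trace_smul,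
          Matrix.mul_one]
        rw [trace_sandwich Ucᴴ Uc (by rw [hUc, hU2]) j i]
        have piece1 : (Ucᴴ * Eb j i * Uc * (B * Eb j i * Bᴴ)).trace
            = (Uc * B) i j * (Bᴴ * Ucᴴ) i j := by
          simp only [Matrix.mul_assoc]
          rw [Matrix.trace_mul_comm]
          rw [Matrix.mul_assoc (Eb j i)]
          rw [Matrix.trace_mul_comm, trace_mul_Eb]
          rw [show Uc * (B * (Eb j i * Bᴴ)) * Ucᴴ = (Uc * B) * Eb j i * (Bᴴ * Ucᴴ) from by
            simp [Matrix.mul_assoc]]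
          rw [mul_Eb_mul]
        rw [piece1]
        by_cases h : i = j <;> simp [h, eq_comm] <;> ring
      simp_rw [termU, Finset.sum_add_distrib, ← Finset.mul_sum]
      rw [show (∑ i : Fin 3, ∑ j : Fin 3, if i = j then (1:ℂ) else 0) = 3 from by
        simp [Finset.sum_ite_eq]]
      ring
    have hC1 : (Uc * B)ᴴ * (Uc * B) = 1 := by
      rw [Matrix.conjTranspose_mul]
      rw [show Bᴴ * Ucᴴ * (Uc * B) = Bᴴ * (Ucᴴ * Uc) * B from by simp [Matrix.mul_assoc]]
      rw [hU1, Matrix.mul_one, hB1]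
    have hC2 : (Uc * B) * (Uc * B)ᴴ = 1 := by
      rw [Matrix.conjTranspose_mul]
      rw [show Uc * B * (Bᴴ * Ucᴴ) = Uc * (B * Bᴴ) * Ucᴴ from by simp [Matrix.mul_assoc]]
      rw [hB2, Matrix.mul_one, hU2]
    have hTre := Tre_ge (Uc * B) hC1 hC2
    rw [show (Uc * B)ᴴ = Bᴴ * Ucᴴ from Matrix.conjTranspose_mul Uc B] at hTre
    unfold pairRe
    rw [hpair, hadsum]
    set T : ℂ := ∑ i : Fin 3, ∑ j : Fin 3, (Uc * B) i j * (Bᴴ * Ucᴴ) i j with hT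
    rw [show ((3:ℂ)⁻¹)^2 * (2⁻¹ * T + 2⁻¹) = (((18:ℝ)⁻¹ : ℝ) : ℂ) * T + (((18:ℝ)⁻¹ : ℝ) : ℂ)
      from by push_cast; ring]
    rw [Complex.add_re]
    rw [show ((((18:ℝ)⁻¹ : ℝ) : ℂ) * T).re = (18:ℝ)⁻¹ * T.re from by
      simp [Complex.mul_re, Complex.ofReal_re, Complex.ofReal_im]]
    rw [show (((((18:ℝ)⁻¹ : ℝ)) : ℂ)).re = (18:ℝ)⁻¹ from by simp]
    nlinarith [hTre]
  -- pairing of Γ with L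
  have hGLsum : ∑ i : Fin 3, ∑ j : Fin 3, ((Γ (Eb i j))ᴴ * L (Eb i j)).trace = -1 := by
    have termGL : ∀ i j : Fin 3, ((Γ (Eb i j))ᴴ * L (Eb i j)).trace
        = 4⁻¹ * (if i = j then 1 else 0) - 4⁻¹ - 2⁻¹ * (B j i * Bᴴ j i) := by
      intro i j
      set δ : ℂ := if i = j then 1 else 0 with hδ
      have hδs : star δ = δ := by by_cases h : i = j <;> simp [hδ, h]
      have eΓH : (Γ (Eb i j))ᴴ
          = (2:ℂ)⁻¹ • (B * Eb i j * Bᴴ) + ((2:ℂ)⁻¹ * (3:ℂ)⁻¹ * δ) • (1 : Md 3) := by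
        rw [hΓ, Eb_trans, trace_Eb, ← hδ]
        simp only [Matrix.conjTranspose_smul, Matrix.conjTranspose_add,
          Matrix.conjTranspose_mul, Matrix.conjTranspose_conjTranspose, Eb_conjT,
          Matrix.conjTranspose_one, hδs, star_inv₀]
        rw [show star (2:ℂ) = 2 from by norm_num, show star (3:ℂ) = 3 from by norm_num]
        rw [← Matrix.mul_assoc]
        module
      have eL : L (Eb i j)
          = ((2:ℂ)⁻¹ * δ) • (1 : Md 3) - (2:ℂ)⁻¹ • (B * Eb j i * Bᴴ) - Eb i j := by
        rw [hL, Eb_trans, trace_Eb, ← hδ]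
        module
      rw [eΓH, eL]
      simp only [Matrix.add_mul, Matrix.smul_mul, Matrix.mul_sub, Matrix.mul_smul,
        Matrix.one_mul, Matrix.mul_one, smul_smul, Matrix.trace_add, Matrix.trace_sub,
        Matrix.trace_smul, smul_eq_mul]
      rw [trace_sandwich B Bᴴ hB1, trace_sandwich B Bᴴ hB1, trace_two_sandwich B hB1,
        trace_mul_Eb, mul_Eb_mul, trace_Eb, Matrix.trace_one]
      by_cases h : i = j <;> simp [hδ, h] <;> ring
    simp_rw [termGL, Finset.sum_sub_distrib, ← Finset.mul_sum]
    rw [show (∑ i : Fin 3, ∑ j : Fin 3, if i = j then (1:ℂ) else 0) = 3 from by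
      simp [Finset.sum_ite_eq]]
    rw [show (∑ i : Fin 3, ∑ j : Fin 3, B j i * Bᴴ j i) = -1 from by
      rw [Finset.sum_comm]; exact hsumB]
    simp
    ring
  have hpair_GL : pairRe Γ L = -(1/9) := by
    unfold pairRe
    rw [hpair, hGLsum]
    rw [show ((3:ℂ)⁻¹)^2 * (-1) = (((-(1/9) : ℝ)) : ℂ) from by push_cast; ring]
    simp
  exact ⟨⟨hLherm, hL1, hLtr⟩, ⟨hΓherm, hΓ1, hΓtr, hpair_id, hpair_adU⟩, hpair_GL⟩
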